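/- Let Γ be a locally rectifiable Jordan curve, w ∉ Γ with δ(w) = dist(w,Γ), p ≥ 2, and F(z) = (w−z)^{-1}. Write Γ_{4w} = Γ ∩ B(w,4δ(w)) and Γ°_{4w} = Γ ∩ {5δ(w) ≤ |z−w| ≤ 6δ(w)}. If ℓ(Γ°_{4w}) ≥ 2δ(w), then ‖F‖_{B_p(Γ)}^p ≥ c δ(w)^{-p-1} ℓ(Γ_{4w}) for a constant c = c(p) > 0. Consequently ‖F‖_{B_p(Γ)}^p ≤ M δ(w)^{-p} implies ℓ(Γ_{4w}) ≤ (M/c) δ(w). -/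

import Mathlib

open MeasureTheory Complex Set Metric
open scoped ENNReal Real

noncomputable section

/-- `γ : ℝ → ℂ` is an (injective) arc-length parametrization: the arc length of `γ` over
`[s, t]` equals `t - s`. Its range is then a locally rectifiable Jordan curve through `∞`. -/
def IsArcLengthParam (γ : ℝ → ℂ) : Prop :=
  Function.Injective γ ∧
    ∀ s t : ℝ, s ≤ t → eVariationOn γ (Set.Icc s t) = ENNReal.ofReal (t - s)

/-- The boundary Besov `p`-norm (to the `p`-th power) of the test function
`F(z) = (w - z)⁻¹` on the curve parametrized by arc length by `γ`:
`‖F‖_{B_p(Γ)}^p = ∫_Γ ∫_Γ |F(ζ) - F(η)|^p |ζ - η|^{-2} |dζ| |dη|`. -/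
def besovTest (p : ℝ) (γ : ℝ → ℂ) (w : ℂ) : ℝ≥0∞ :=
  ∫⁻ s : ℝ, ∫⁻ t : ℝ,
    ENNReal.ofReal (‖(w - γ s)⁻¹ - (w - γ t)⁻¹‖ ^ p * dist (γ s) (γ t) ^ (-2 : ℝ))

lemma aux_e (p d X : ℝ) (hd : 0 < d) (hX : 0 < X) :
    (X / (24 * (d * d))) ^ p * X ^ (-2 : ℝ)
      = 24 ^ (-p) * ((d * d) ^ (-p) * X ^ (p - 2)) := by
  rw [Real.div_rpow hX.le (by positivity), Real.mul_rpow (by norm_num) (by positivity),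
    Real.rpow_neg (by norm_num : (0:ℝ) ≤ 24), Real.rpow_neg (by positivity : (0:ℝ) ≤ d * d),
    show p - 2 = p + (-2) by ring, Real.rpow_add hX, Real.rpow_neg hX.le]
  rw [div_eq_mul_inv, mul_inv]
  ring

lemma aux_e2 (p d : ℝ) (hd : 0 < d) :
    (d * d) ^ (-p) * d ^ (p - 2) = d ^ (-p - 2) := by
  rw [Real.mul_rpow hd.le hd.le, ← Real.rpow_add hd, ← Real.rpow_add hd]
  congr 1
  ring

lemma key_real (p d a b D : ℝ) (hp : 2 ≤ p) (hd : 0 < d)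
    (ha1 : d ≤ a) (ha2 : a ≤ 4 * d) (hb1 : 5 * d ≤ b) (hb2 : b ≤ 6 * d) (hD : d ≤ D) :
    24 ^ (-p) * d ^ (-p - 2) ≤ (D / (a * b)) ^ p * D ^ (-2 : ℝ) := by
  have ha0 : 0 < a := hd.trans_le ha1
  have hb0 : 0 < b := lt_of_lt_of_le (by linarith) hb1
  have hD0 : 0 < D := hd.trans_le hD
  have hab : a * b ≤ 24 * (d * d) := by nlinarith
  calc 24 ^ (-p) * d ^ (-p - 2)
      = 24 ^ (-p) * ((d * d) ^ (-p) * d ^ (p - 2)) := by rw [aux_e2 p d hd]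
    _ ≤ 24 ^ (-p) * ((d * d) ^ (-p) * D ^ (p - 2)) := by
        gcongr <;> first | positivity | linarith
    _ = (D / (24 * (d * d))) ^ p * D ^ (-2 : ℝ) := (aux_e p d D hd hD0).symm
    _ ≤ (D / (a * b)) ^ p * D ^ (-2 : ℝ) := by
        gcongr <;> first | positivity | linarith

/-- For `p ≥ 2`, `w ∉ Γ`, `F(z) = (w-z)⁻¹`, `Γ_{4w} = Γ ∩ B(w, 4δ(w))` and the annular
piece `Γ°_{4w} = Γ ∩ {5δ(w) ≤ |z-w| ≤ 6δ(w)}`: if `ℓ(Γ°_{4w}) ≥ 2δ(w)`, then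
`‖F‖_{B_p(Γ)}^p ≥ c δ(w)^{-p-1} ℓ(Γ_{4w})` with `c = c(p) > 0`; consequently
`‖F‖_{B_p(Γ)}^p ≤ M δ(w)^{-p}` implies `ℓ(Γ_{4w}) ≤ (M/c) δ(w)`. -/
theorem statement16 (p : ℝ) (hp : 2 ≤ p) :
    ∃ c : ℝ, 0 < c ∧
      ∀ (γ : ℝ → ℂ) (w : ℂ) (d : ℝ),
        IsArcLengthParam γ → w ∉ Set.range γ →
        d = Metric.infDist w (Set.range γ) → 0 < d →
        ENNReal.ofReal (2 * d) ≤
          volume (γ ⁻¹' {z : ℂ | 5 * d ≤ dist z w ∧ dist z w ≤ 6 * d}) →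
        (ENNReal.ofReal (c * d ^ (-p - 1)) *
            volume (γ ⁻¹' Metric.ball w (4 * d)) ≤ besovTest p γ w) ∧
        (∀ M : ℝ, 0 < M → besovTest p γ w ≤ ENNReal.ofReal (M * d ^ (-p)) →
          volume (γ ⁻¹' Metric.ball w (4 * d)) ≤ ENNReal.ofReal ((M / c) * d)) := by
  have hc : (0:ℝ) < 2 * 24 ^ (-p) := by positivity
  refine ⟨2 * 24 ^ (-p), hc, ?_⟩
  intro γ w d hγ hw hdd hd hBvol
  set A := γ ⁻¹' Metric.ball w (4 * d) with hA_def
  set B := γ ⁻¹' {z : ℂ | 5 * d ≤ dist z w ∧ dist z w ≤ 6 * d} with hB_def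
  -- γ is 1-Lipschitz, hence measurable
  have hlip : LipschitzWith 1 γ := by
    intro s t
    rcases le_total s t with h | h
    · calc edist (γ s) (γ t) ≤ eVariationOn γ (Set.Icc s t) :=
            eVariationOn.edist_le γ ⟨le_refl s, h⟩ ⟨h, le_refl t⟩
        _ = ENNReal.ofReal (t - s) := hγ.2 s t h
        _ ≤ 1 * edist s t := by
            rw [one_mul, edist_dist, Real.dist_eq, abs_sub_comm]
            exact ENNReal.ofReal_le_ofReal (le_abs_self _)
    · calc edist (γ s) (γ t) = edist (γ t) (γ s) := edist_comm _ _
        _ ≤ eVariationOn γ (Set.Icc t s) :=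
            eVariationOn.edist_le γ ⟨le_refl t, h⟩ ⟨h, le_refl s⟩
        _ = ENNReal.ofReal (s - t) := hγ.2 t s h
        _ ≤ 1 * edist s t := by
            rw [one_mul, edist_dist, Real.dist_eq]
            exact ENNReal.ofReal_le_ofReal (le_abs_self _)
  have hmeas : Measurable γ := hlip.continuous.measurable
  have hA : MeasurableSet A := hmeas measurableSet_ball
  have hB : MeasurableSet B := by
    apply hmeas
    have : {z : ℂ | 5 * d ≤ dist z w ∧ dist z w ≤ 6 * d}
        = {z : ℂ | 5 * d ≤ dist z w} ∩ {z : ℂ | dist z w ≤ 6 * d} := rfl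
    rw [this]
    exact (measurableSet_le measurable_const (measurable_id.dist measurable_const)).inter
      (measurableSet_le (measurable_id.dist measurable_const) measurable_const)
  -- pointwise lower bound
  have hpoint : ∀ s ∈ A, ∀ t ∈ B,
      ENNReal.ofReal (24 ^ (-p) * d ^ (-p - 2)) ≤
        ENNReal.ofReal (‖(w - γ s)⁻¹ - (w - γ t)⁻¹‖ ^ p * dist (γ s) (γ t) ^ (-2 : ℝ)) := by
    intro s hs t ht
    apply ENNReal.ofReal_le_ofReal
    have hs' : dist (γ s) w < 4 * d := by simpa [A, Metric.mem_ball] using hs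
    have ht' : 5 * d ≤ dist (γ t) w ∧ dist (γ t) w ≤ 6 * d := ht
    have ha1 : d ≤ ‖w - γ s‖ := by
      rw [hdd, ← dist_eq_norm]
      exact Metric.infDist_le_dist_of_mem ⟨s, rfl⟩
    have hb1 : d ≤ ‖w - γ t‖ := by
      rw [hdd, ← dist_eq_norm]
      exact Metric.infDist_le_dist_of_mem ⟨t, rfl⟩
    have ha2 : ‖w - γ s‖ ≤ 4 * d := by
      rw [← dist_eq_norm, dist_comm]; exact hs'.le
    have hbl : 5 * d ≤ ‖w - γ t‖ := by
      rw [← dist_eq_norm, dist_comm]; exact ht'.1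
    have hbu : ‖w - γ t‖ ≤ 6 * d := by
      rw [← dist_eq_norm, dist_comm]; exact ht'.2
    have hDl : d ≤ dist (γ s) (γ t) := by
      have := dist_triangle (γ t) (γ s) w
      have h1 : dist (γ t) (γ s) = dist (γ s) (γ t) := dist_comm _ _
      linarith [ht'.1, hs', dist_triangle (γ t) (γ s) w]
    have hws : w - γ s ≠ 0 := by
      intro h; rw [h, norm_zero] at ha1; linarith
    have hwt : w - γ t ≠ 0 := by
      intro h; rw [h, norm_zero] at hb1; linarith
    have hdiff : (w - γ s)⁻¹ - (w - γ t)⁻¹ = (γ s - γ t) / ((w - γ s) * (w - γ t)) := by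
      field_simp
      ring
    have hnorm : ‖(w - γ s)⁻¹ - (w - γ t)⁻¹‖
        = dist (γ s) (γ t) / (‖w - γ s‖ * ‖w - γ t‖) := by
      rw [hdiff, norm_div, norm_mul, dist_eq_norm]
    rw [hnorm]
    exact key_real p d _ _ _ hp hd ha1 ha2 hbl hbu hDl
  -- main inequality
  have main : ENNReal.ofReal (2 * 24 ^ (-p) * d ^ (-p - 1)) * volume A ≤ besovTest p γ w := by
    have hval : (2:ℝ) * 24 ^ (-p) * d ^ (-p - 1) = 24 ^ (-p) * d ^ (-p - 2) * (2 * d) := by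
      have hexp : d ^ (-p - 1) = d ^ (-p - 2) * d := by
        rw [show -p - 1 = (-p - 2) + 1 by ring, Real.rpow_add hd, Real.rpow_one]
      rw [hexp]; ring
    calc ENNReal.ofReal (2 * 24 ^ (-p) * d ^ (-p - 1)) * volume A
        = (ENNReal.ofReal (24 ^ (-p) * d ^ (-p - 2)) * ENNReal.ofReal (2 * d)) * volume A := by
          rw [← ENNReal.ofReal_mul (by positivity), ← hval]
      _ ≤ (ENNReal.ofReal (24 ^ (-p) * d ^ (-p - 2)) * volume B) * volume A :=
          mul_le_mul_left (mul_le_mul_right hBvol _) _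
      _ = ∫⁻ _ in A, ENNReal.ofReal (24 ^ (-p) * d ^ (-p - 2)) * volume B := by
          rw [MeasureTheory.setLIntegral_const]
      _ = ∫⁻ _ in A, ∫⁻ _ in B, ENNReal.ofReal (24 ^ (-p) * d ^ (-p - 2)) := by
          simp [MeasureTheory.setLIntegral_const]
      _ ≤ ∫⁻ s in A, ∫⁻ t in B,
            ENNReal.ofReal (‖(w - γ s)⁻¹ - (w - γ t)⁻¹‖ ^ p * dist (γ s) (γ t) ^ (-2 : ℝ)) := by
          refine setLIntegral_mono' hA fun s hs => ?_
          exact setLIntegral_mono' hB fun t ht => hpoint s hs t ht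
      _ ≤ ∫⁻ s in A, ∫⁻ t,
            ENNReal.ofReal (‖(w - γ s)⁻¹ - (w - γ t)⁻¹‖ ^ p * dist (γ s) (γ t) ^ (-2 : ℝ)) :=
          lintegral_mono fun s => setLIntegral_le_lintegral _ _
      _ ≤ besovTest p γ w := setLIntegral_le_lintegral _ _
  refine ⟨main, ?_⟩
  intro M hM hbesov
  have h1 : ENNReal.ofReal (2 * 24 ^ (-p) * d ^ (-p - 1)) * volume A
      ≤ ENNReal.ofReal (M * d ^ (-p)) := main.trans hbesov
  have hX0 : ENNReal.ofReal (2 * 24 ^ (-p) * d ^ (-p - 1)) ≠ 0 := by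
    exact (ENNReal.ofReal_pos.mpr (by positivity)).ne'
  have hXtop : ENNReal.ofReal (2 * 24 ^ (-p) * d ^ (-p - 1)) ≠ ⊤ := ENNReal.ofReal_ne_top
  have heq : ENNReal.ofReal (M * d ^ (-p))
      = ENNReal.ofReal (2 * 24 ^ (-p) * d ^ (-p - 1)) * ENNReal.ofReal (M / (2 * 24 ^ (-p)) * d) := by
    rw [← ENNReal.ofReal_mul (by positivity)]
    congr 1
    have h24 : (2:ℝ) * 24 ^ (-p) ≠ 0 := ne_of_gt hc
    field_simp
    rw [show -p = (-p - 1) + 1 by ring, Real.rpow_add hd, Real.rpow_one]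
    ring
  rw [heq] at h1
  exact (ENNReal.mul_le_mul_iff_right hX0 hXtop).mp h1
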